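/- Let n ≥ 1, C ∈ ℝ^{1×n}, θ ∈ ℝ, t₀ ∈ ℝ, let 𝒜 : ℝ → ℝ^{n×n} be continuous and bounded, and let S₀ ∈ ℝ^{n×n} be symmetric. Then there exists a unique differentiable S : [t₀,∞) → ℝ^{n×n} with S(t₀) = S₀ and S'(t) = −𝒜(t)ᵀS(t) − S(t)𝒜(t) − θS(t) + CᵀC for all t ≥ t₀; moreover S(t) is symmetric for every t ≥ t₀. -/

import Mathlib

open Matrix Set Filter Topology

attribute [local instance] Matrix.normedAddCommGroup Matrix.normedSpace

variable {n : ℕ}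

lemma hasDerivWithinAt_matrix {S : ℝ → Matrix (Fin n) (Fin n) ℝ} {V : Matrix (Fin n) (Fin n) ℝ}
    {s : Set ℝ} {t : ℝ} :
    HasDerivWithinAt S V s t ↔ ∀ i j, HasDerivWithinAt (fun τ => S τ i j) (V i j) s t := by
  exact (hasDerivWithinAt_pi (φ := fun τ => (S τ : Fin n → Fin n → ℝ))).trans
    (forall_congr' fun i => hasDerivWithinAt_pi)

lemma euclid_coord_le (x : EuclideanSpace ℝ (Fin n)) (i : Fin n) : |x i| ≤ ‖x‖ := by
  rw [EuclideanSpace.norm_eq]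
  refine Real.le_sqrt_of_sq_le ?_
  rw [sq_abs]
  calc x i ^ 2 = ‖x i‖ ^ 2 := by rw [Real.norm_eq_abs, sq_abs]
    _ ≤ ∑ j, ‖x j‖ ^ 2 := Finset.single_le_sum (f := fun j => ‖x j‖^2)
        (fun _ _ => sq_nonneg _) (Finset.mem_univ i)

lemma entry_le_clm_norm (A : Matrix (Fin n) (Fin n) ℝ) (i j : Fin n) :
    |A i j| ≤ ‖Matrix.toEuclideanCLM (𝕜 := ℝ) A‖ := by
  have h := Matrix.toEuclideanCLM_toLp (𝕜 := ℝ) A (Pi.single j 1)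
  have h2 : |A i j| ≤ ‖toEuclideanCLM (𝕜 := ℝ) A (WithLp.toLp 2 (Pi.single j 1))‖ := by
    rw [h]
    have := euclid_coord_le (WithLp.toLp 2 (A *ᵥ Pi.single j 1)) i
    simpa [Matrix.mulVec_single] using this
  refine h2.trans ?_
  calc ‖toEuclideanCLM (𝕜 := ℝ) A (WithLp.toLp 2 (Pi.single j 1))‖
      ≤ ‖toEuclideanCLM (𝕜 := ℝ) A‖ * ‖WithLp.toLp 2 (Pi.single j 1)‖ :=
        ContinuousLinearMap.le_opNorm _ _
    _ ≤ ‖toEuclideanCLM (𝕜 := ℝ) A‖ := by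
        have : ‖WithLp.toLp 2 (Pi.single j 1)‖ = 1 :=
          (PiLp.norm_toLp_single 2 (fun _ => ℝ) j (1:ℝ)).trans norm_one
        rw [this, mul_one]

lemma norm_matrix_mul_le (A B : Matrix (Fin n) (Fin n) ℝ) : ‖A * B‖ ≤ n * ‖A‖ * ‖B‖ := by
  rw [Matrix.norm_le_iff (by positivity)]
  intro i j
  calc ‖(A * B) i j‖ = |∑ k, A i k * B k j| := by simp [Matrix.mul_apply]
    _ ≤ ∑ k, |A i k * B k j| := Finset.abs_sum_le_sum_abs _ _
    _ ≤ ∑ _k : Fin n, ‖A‖ * ‖B‖ := by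
        refine Finset.sum_le_sum fun k _ => ?_
        rw [abs_mul]
        exact mul_le_mul (A.norm_entry_le_entrywise_sup_norm) (B.norm_entry_le_entrywise_sup_norm)
          (abs_nonneg _) (norm_nonneg _)
    _ = n * ‖A‖ * ‖B‖ := by simp [mul_assoc]

section vf

variable (𝒜 : ℝ → Matrix (Fin n) (Fin n) ℝ) (θ : ℝ) (Q : Matrix (Fin n) (Fin n) ℝ)

/-- The Lyapunov vector field. -/
def vf (t : ℝ) (X : Matrix (Fin n) (Fin n) ℝ) : Matrix (Fin n) (Fin n) ℝ :=
  -(𝒜 t)ᵀ * X - X * 𝒜 t - θ • X + Q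

lemma vf_sub (t : ℝ) (X Y : Matrix (Fin n) (Fin n) ℝ) :
    vf 𝒜 θ Q t X - vf 𝒜 θ Q t Y
      = -(𝒜 t)ᵀ * (X - Y) - (X - Y) * 𝒜 t - θ • (X - Y) := by
  simp only [vf, mul_sub, sub_mul, smul_sub]
  abel

lemma vf_zero (t : ℝ) : vf 𝒜 θ Q t 0 = Q := by simp [vf]

lemma vf_transpose (t : ℝ) (hQ : Qᵀ = Q) (X : Matrix (Fin n) (Fin n) ℝ) :
    (vf 𝒜 θ Q t X)ᵀ = vf 𝒜 θ Q t Xᵀ := by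
  simp only [vf, Matrix.transpose_add, Matrix.transpose_sub, Matrix.transpose_mul,
    Matrix.transpose_smul, Matrix.transpose_neg, Matrix.transpose_transpose, hQ,
    Matrix.neg_mul, Matrix.mul_neg]
  abel

end vf

section lip

variable {𝒜 : ℝ → Matrix (Fin n) (Fin n) ℝ} {θ : ℝ} {Q : Matrix (Fin n) (Fin n) ℝ}
  {M : ℝ}

lemma norm_vf_sub_le (hA : ∀ t, ‖𝒜 t‖ ≤ M) (t : ℝ) (X Y : Matrix (Fin n) (Fin n) ℝ) :
    ‖vf 𝒜 θ Q t X - vf 𝒜 θ Q t Y‖ ≤ (2 * n * M + |θ|) * ‖X - Y‖ := by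
  rw [vf_sub]
  set Z := X - Y
  have h1 : ‖-(𝒜 t)ᵀ * Z‖ ≤ n * M * ‖Z‖ := by
    calc ‖-(𝒜 t)ᵀ * Z‖ ≤ n * ‖-(𝒜 t)ᵀ‖ * ‖Z‖ := norm_matrix_mul_le _ _
      _ = n * ‖𝒜 t‖ * ‖Z‖ := by rw [norm_neg, Matrix.norm_transpose]
      _ ≤ n * M * ‖Z‖ := by gcongr; exact hA t
  have h3 : ‖Z * 𝒜 t‖ ≤ n * M * ‖Z‖ := by
    calc ‖Z * 𝒜 t‖ ≤ n * ‖Z‖ * ‖𝒜 t‖ := norm_matrix_mul_le _ _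
      _ ≤ n * ‖Z‖ * M := by gcongr; exact hA t
      _ = n * M * ‖Z‖ := by ring
  have h4 : ‖θ • Z‖ = |θ| * ‖Z‖ := by rw [norm_smul, Real.norm_eq_abs]
  calc ‖-(𝒜 t)ᵀ * Z - Z * 𝒜 t - θ • Z‖
      ≤ ‖-(𝒜 t)ᵀ * Z - Z * 𝒜 t‖ + ‖θ • Z‖ := norm_sub_le _ _
    _ ≤ ‖-(𝒜 t)ᵀ * Z‖ + ‖Z * 𝒜 t‖ + ‖θ • Z‖ := by gcongr; exact norm_sub_le _ _
    _ ≤ n * M * ‖Z‖ + n * M * ‖Z‖ + |θ| * ‖Z‖ := by rw [h4]; gcongr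
    _ = (2 * n * M + |θ|) * ‖Z‖ := by ring

lemma lipschitz_vf (hA : ∀ t, ‖𝒜 t‖ ≤ M) (t : ℝ) :
    LipschitzWith (Real.toNNReal (2 * n * M + |θ|)) (vf 𝒜 θ Q t) := by
  have hM0 : (0:ℝ) ≤ M := le_trans (norm_nonneg _) (hA 0)
  refine LipschitzWith.of_dist_le_mul fun X Y => ?_
  rw [dist_eq_norm, dist_eq_norm, Real.coe_toNNReal _ (by positivity)]
  exact norm_vf_sub_le hA t X Y

lemma norm_vf_le (hA : ∀ t, ‖𝒜 t‖ ≤ M) (t : ℝ) (X : Matrix (Fin n) (Fin n) ℝ) :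
    ‖vf 𝒜 θ Q t X‖ ≤ (2 * n * M + |θ|) * ‖X‖ + ‖Q‖ := by
  have h := norm_vf_sub_le (Q := Q) (θ := θ) hA t X 0
  rw [vf_zero, sub_zero] at h
  have h2 : ‖vf 𝒜 θ Q t X‖ ≤ ‖vf 𝒜 θ Q t X - Q‖ + ‖Q‖ := by
    simpa using norm_add_le (vf 𝒜 θ Q t X - Q) Q
  linarith

lemma continuous_vf (hA : Continuous 𝒜) (X : Matrix (Fin n) (Fin n) ℝ) :
    Continuous fun t => vf 𝒜 θ Q t X := by
  unfold vf
  exact (((hA.matrix_transpose.neg.matrix_mul continuous_const).sub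
    (continuous_const.matrix_mul hA)).sub continuous_const).add continuous_const

end lip

noncomputable def stp (n : ℕ) (M θ : ℝ) : ℝ := (2 * (2 * n * M + |θ|) + 2)⁻¹

section exist

variable {𝒜 : ℝ → Matrix (Fin n) (Fin n) ℝ} {θ : ℝ} {Q : Matrix (Fin n) (Fin n) ℝ} {M : ℝ}

lemma stp_pos (hM : 0 ≤ M) : 0 < stp n M θ := by
  unfold stp
  have h : (0:ℝ) ≤ 2 * n * M + |θ| := by positivity
  positivity

lemma lip_mul_stp_le (hM : 0 ≤ M) : (2 * n * M + |θ|) * stp n M θ ≤ 1 / 2 := by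
  have h : (0:ℝ) ≤ 2 * n * M + |θ| := by positivity
  have hpos : (0:ℝ) < 2 * (2 * n * M + |θ|) + 2 := by linarith
  have hc : stp n M θ * (2 * (2 * n * M + |θ|) + 2) = 1 := inv_mul_cancel₀ hpos.ne'
  nlinarith [stp_pos (θ := θ) (n := n) hM]

lemma hasDeriv_Ici_of_Icc {f : ℝ → Matrix (Fin n) (Fin n) ℝ} {v : Matrix (Fin n) (Fin n) ℝ}
    {a b t : ℝ} (ha : a ≤ t) (hb : t < b) (hf : HasDerivWithinAt f v (Icc a b) t) :
    HasDerivWithinAt f v (Ici t) t := by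
  refine hf.mono_of_mem_nhdsWithin ?_
  rw [mem_nhdsWithin]
  exact ⟨Iio b, isOpen_Iio, hb, fun x hx => ⟨ha.trans hx.2, hx.1.le⟩⟩

lemma unique_Icc (hAM : ∀ t, ‖𝒜 t‖ ≤ M) {f g : ℝ → Matrix (Fin n) (Fin n) ℝ} {a b : ℝ}
    (hf : ContinuousOn f (Icc a b))
    (hf' : ∀ t ∈ Ico a b, HasDerivWithinAt f (vf 𝒜 θ Q t (f t)) (Ici t) t)
    (hg : ContinuousOn g (Icc a b))
    (hg' : ∀ t ∈ Ico a b, HasDerivWithinAt g (vf 𝒜 θ Q t (g t)) (Ici t) t)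
    (hab : f a = g a) : EqOn f g (Icc a b) :=
  ODE_solution_unique_of_mem_Icc_right (v := vf 𝒜 θ Q) (s := fun _ => univ)
    (fun t _ => (lipschitz_vf hAM t).lipschitzOnWith)
    hf hf' (fun _ _ => mem_univ _) hg hg' (fun _ _ => mem_univ _) hab

lemma exists_local (hA : Continuous 𝒜) (hAM : ∀ t, ‖𝒜 t‖ ≤ M) (a : ℝ)
    (x₀ : Matrix (Fin n) (Fin n) ℝ) :
    ∃ S : ℝ → Matrix (Fin n) (Fin n) ℝ, S a = x₀ ∧
      ∀ t ∈ Icc a (a + stp n M θ),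
        HasDerivWithinAt S (vf 𝒜 θ Q t (S t)) (Icc a (a + stp n M θ)) t := by
  have hM0 : (0:ℝ) ≤ M := le_trans (norm_nonneg _) (hAM 0)
  set L : ℝ := 2 * n * M + |θ| with hL
  have hL0 : 0 ≤ L := by positivity
  have hstp := stp_pos (θ := θ) (n := n) hM0
  have hls := lip_mul_stp_le (θ := θ) (n := n) hM0
  set h : ℝ := stp n M θ
  set R : ℝ := 2 * h * (L * ‖x₀‖ + ‖Q‖) with hR
  have hR0 : 0 ≤ R := by positivity
  set Cb : ℝ := L * (‖x₀‖ + R) + ‖Q‖ with hCb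
  have hCb0 : 0 ≤ Cb := add_nonneg (mul_nonneg hL0 (by linarith [norm_nonneg x₀])) (norm_nonneg _)
  have hpl : IsPicardLindelof (vf 𝒜 θ Q) (tmin := a) (tmax := a + h) ⟨a, le_refl _, by linarith⟩
      x₀ (Real.toNNReal R) 0 (Real.toNNReal Cb) (Real.toNNReal L) := by
    constructor
    · exact fun t _ => (lipschitz_vf hAM t).lipschitzOnWith
    · exact fun x _ => (continuous_vf hA x).continuousOn
    · intro t _ x hx
      rw [Real.coe_toNNReal _ hCb0]
      have hxn : ‖x‖ ≤ ‖x₀‖ + R := by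
        have := mem_closedBall_iff_norm.mp hx
        rw [Real.coe_toNNReal _ hR0] at this
        have h2 : ‖x‖ ≤ ‖x - x₀‖ + ‖x₀‖ := by
          simpa using norm_add_le (x - x₀) x₀
        linarith
      calc ‖vf 𝒜 θ Q t x‖ ≤ L * ‖x‖ + ‖Q‖ := norm_vf_le hAM t x
        _ ≤ Cb := by rw [hCb]; gcongr
    · have hmax : max (a + h - a) (a - a) = h := by
        rw [max_eq_left (by linarith)]; ring
      simp only [Real.coe_toNNReal _ hCb0, Real.coe_toNNReal _ hR0, NNReal.coe_zero, sub_zero]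
      rw [hmax]
      have hls' : L * h ≤ 1 / 2 := hls
      clear_value L h R Cb
      have heq : Cb * h = (L * ‖x₀‖ + ‖Q‖) * h + L * h * R := by rw [hCb]; ring
      have h1 : (L * ‖x₀‖ + ‖Q‖) * h = R / 2 := by rw [hR]; ring
      linarith [mul_le_mul_of_nonneg_right hls' hR0]
  exact hpl.exists_eq_forall_mem_Icc_hasDerivWithinAt₀

lemma exists_Icc (hA : Continuous 𝒜) (hAM : ∀ t, ‖𝒜 t‖ ≤ M) (t₀ : ℝ)
    (S₀ : Matrix (Fin n) (Fin n) ℝ) (k : ℕ) :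
    ∃ S : ℝ → Matrix (Fin n) (Fin n) ℝ, S t₀ = S₀ ∧
      ∀ t ∈ Icc t₀ (t₀ + k * stp n M θ),
        HasDerivWithinAt S (vf 𝒜 θ Q t (S t)) (Icc t₀ (t₀ + k * stp n M θ)) t := by
  have hM0 : (0:ℝ) ≤ M := le_trans (norm_nonneg _) (hAM 0)
  have hstp := stp_pos (θ := θ) (n := n) hM0
  induction k with
  | zero =>
    obtain ⟨S, hS0, hS⟩ := exists_local (Q := Q) (θ := θ) hA hAM t₀ S₀
    refine ⟨S, hS0, fun t ht => ?_⟩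
    simp only [Nat.cast_zero, zero_mul, add_zero] at ht ⊢
    have : t = t₀ := le_antisymm ht.2 ht.1
    subst this
    exact (hS t ⟨le_refl _, by linarith⟩).mono (by
      intro x hx
      exact ⟨hx.1, by rw [mem_Icc] at hx; linarith⟩)
  | succ k ih =>
    obtain ⟨S, hS0, hS⟩ := ih
    set b : ℝ := t₀ + k * stp n M θ with hbdef
    have hb : t₀ ≤ b := by
      have : (0:ℝ) ≤ k * stp n M θ := by positivity
      linarith
    obtain ⟨T, hT0, hT⟩ := exists_local (Q := Q) (θ := θ) hA hAM b (S b)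
    have hend : t₀ + ((k:ℝ) + 1) * stp n M θ = b + stp n M θ := by
      rw [hbdef]; ring
    refine ⟨fun t => if t ≤ b then S t else T t, by simp [hb, hS0], fun t ht => ?_⟩
    push_cast at ht ⊢
    rw [hend] at ht ⊢
    set U : ℝ → Matrix (Fin n) (Fin n) ℝ := fun t => if t ≤ b then S t else T t with hU
    rcases lt_trichotomy t b with htb | htb | htb
    · -- t < b
      have hmem : Icc t₀ b ∈ 𝓝[Icc t₀ (b + stp n M θ)] t := by
        rw [mem_nhdsWithin]
        exact ⟨Iio b, isOpen_Iio, htb, fun x hx => ⟨hx.2.1, hx.1.le⟩⟩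
      have hd : HasDerivWithinAt S (vf 𝒜 θ Q t (S t)) (Icc t₀ (b + stp n M θ)) t :=
        (hS t ⟨ht.1, htb.le⟩).mono_of_mem_nhdsWithin hmem
      have hev : U =ᶠ[𝓝[Icc t₀ (b + stp n M θ)] t] S := by
        filter_upwards [mem_nhdsWithin.mpr
          ⟨Iio b, isOpen_Iio, htb, fun x hx => hx⟩] with τ hτ
        exact if_pos (le_of_lt hτ.1)
      have hUt : U t = S t := if_pos htb.le
      rw [if_pos htb.le]
      exact hd.congr_of_eventuallyEq hev hUt
    · -- t = b
      subst htb
      have hUb : U b = S b := if_pos le_rfl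
      have hleft : HasDerivWithinAt U (vf 𝒜 θ Q b (U b)) (Icc t₀ b) b := by
        rw [hUb]
        exact (hS b ⟨hb, le_refl b⟩).congr (fun τ hτ => if_pos hτ.2) hUb
      have hright : HasDerivWithinAt U (vf 𝒜 θ Q b (U b)) (Icc b (b + stp n M θ)) b := by
        have hUb' : U b = T b := by rw [hUb, hT0]
        rw [hUb']
        refine (hT b ⟨le_refl b, by linarith⟩).congr (fun τ hτ => ?_) hUb'
        by_cases hc : τ ≤ b
        · have : τ = b := le_antisymm hc hτ.1
          subst this
          exact hUb'
        · exact if_neg hc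
      have hun : Icc t₀ (b + stp n M θ) = Icc t₀ b ∪ Icc b (b + stp n M θ) :=
        (Icc_union_Icc_eq_Icc hb (by linarith)).symm
      rw [hun]
      exact hleft.union hright
    · -- t > b
      have hmem : Icc b (b + stp n M θ) ∈ 𝓝[Icc t₀ (b + stp n M θ)] t := by
        rw [mem_nhdsWithin]
        exact ⟨Ioi b, isOpen_Ioi, htb, fun x hx => ⟨hx.1.le, hx.2.2⟩⟩
      have hd : HasDerivWithinAt T (vf 𝒜 θ Q t (T t)) (Icc t₀ (b + stp n M θ)) t :=
        (hT t ⟨htb.le, ht.2⟩).mono_of_mem_nhdsWithin hmem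
      have hev : U =ᶠ[𝓝[Icc t₀ (b + stp n M θ)] t] T := by
        filter_upwards [mem_nhdsWithin.mpr
          ⟨Ioi b, isOpen_Ioi, htb, fun x hx => hx⟩] with τ hτ
        exact if_neg (not_le.mpr hτ.1)
      have hUt : U t = T t := if_neg (not_le.mpr htb)
      rw [if_neg (not_le.mpr htb)]
      exact hd.congr_of_eventuallyEq hev hUt

end exist

section glob

variable {𝒜 : ℝ → Matrix (Fin n) (Fin n) ℝ} {θ : ℝ} {Q : Matrix (Fin n) (Fin n) ℝ} {M : ℝ}

lemma exists_Ici (hA : Continuous 𝒜) (hAM : ∀ t, ‖𝒜 t‖ ≤ M) (t₀ : ℝ)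
    (S₀ : Matrix (Fin n) (Fin n) ℝ) :
    ∃ S : ℝ → Matrix (Fin n) (Fin n) ℝ, S t₀ = S₀ ∧
      ∀ t ∈ Ici t₀, HasDerivWithinAt S (vf 𝒜 θ Q t (S t)) (Ici t₀) t := by
  have hM0 : (0:ℝ) ≤ M := le_trans (norm_nonneg _) (hAM 0)
  have hstp := stp_pos (θ := θ) (n := n) hM0
  choose Sol hSol0 hSol using fun k => exists_Icc (Q := Q) (θ := θ) hA hAM t₀ S₀ k
  have hmono : ∀ j m : ℕ, j ≤ m → EqOn (Sol j) (Sol m) (Icc t₀ (t₀ + j * stp n M θ)) := by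
    intro j m hjm
    have hjm' : t₀ + (j:ℝ) * stp n M θ ≤ t₀ + (m:ℝ) * stp n M θ := by
      have hc : (j:ℝ) ≤ m := Nat.cast_le.mpr hjm
      have := mul_le_mul_of_nonneg_right hc hstp.le
      linarith
    refine unique_Icc hAM
      (fun τ hτ => (hSol j τ hτ).continuousWithinAt)
      (fun τ hτ => hasDeriv_Ici_of_Icc hτ.1 hτ.2 (hSol j τ ⟨hτ.1, hτ.2.le⟩))
      (ContinuousOn.mono (fun τ hτ => (hSol m τ hτ).continuousWithinAt)
        (Icc_subset_Icc_right hjm'))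
      (fun τ hτ => hasDeriv_Ici_of_Icc hτ.1 (lt_of_lt_of_le hτ.2 hjm')
        (hSol m τ ⟨hτ.1, hτ.2.le.trans hjm'⟩))
      ((hSol0 j).trans (hSol0 m).symm)
  have hcons : ∀ (j m : ℕ) (τ : ℝ), τ ∈ Icc t₀ (t₀ + j * stp n M θ) →
      τ ∈ Icc t₀ (t₀ + m * stp n M θ) → Sol j τ = Sol m τ := by
    intro j m τ h1 h2
    rcases le_total j m with h | h
    · exact hmono j m h h1
    · exact (hmono m j h h2).symm
  set K : ℝ → ℕ := fun t => ⌈(t - t₀) / stp n M θ⌉₊ + 1 with hK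
  have hKlt : ∀ t : ℝ, t < t₀ + (K t : ℝ) * stp n M θ := by
    intro t
    have h1 : (t - t₀) / stp n M θ ≤ (⌈(t - t₀) / stp n M θ⌉₊ : ℝ) := Nat.le_ceil _
    have h2 : t - t₀ ≤ (⌈(t - t₀) / stp n M θ⌉₊ : ℝ) * stp n M θ := by
      rw [div_le_iff₀ hstp] at h1; exact h1
    have h3 : (K t : ℝ) * stp n M θ
        = (⌈(t - t₀) / stp n M θ⌉₊ : ℝ) * stp n M θ + stp n M θ := by
      simp only [hK]; push_cast; ring
    linarith
  refine ⟨fun t => Sol (K t) t, hSol0 _, fun t ht => ?_⟩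
  have hb := hKlt t
  have hbase : HasDerivWithinAt (Sol (K t)) (vf 𝒜 θ Q t (Sol (K t) t)) (Ici t₀) t := by
    refine (hSol (K t) t ⟨ht, hb.le⟩).mono_of_mem_nhdsWithin ?_
    rw [mem_nhdsWithin]
    exact ⟨Iio (t₀ + (K t : ℝ) * stp n M θ), isOpen_Iio, hb, fun x hx => ⟨hx.2, hx.1.le⟩⟩
  have hev : (fun t => Sol (K t) t) =ᶠ[𝓝[Ici t₀] t] Sol (K t) := by
    filter_upwards [mem_nhdsWithin.mpr
      ⟨Iio (t₀ + (K t : ℝ) * stp n M θ), isOpen_Iio, hb, fun x hx => hx⟩] with τ hτ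
    exact hcons (K τ) (K t) τ ⟨hτ.2, (hKlt τ).le⟩ ⟨hτ.2, hτ.1.le⟩
  exact hbase.congr_of_eventuallyEq hev rfl

end glob

/-- For continuous bounded `𝒜` and symmetric `S₀`, the Lyapunov differential
equation `S' = −𝒜ᵀS − S𝒜 − θS + CᵀC`, `S(t₀) = S₀`, has a solution on `[t₀,∞)`, unique
on `[t₀,∞)`, and the solution is symmetric for every `t ≥ t₀`. -/
theorem lyapunov_ode_existence_uniqueness_symmetric
    {n : ℕ} (hn : 1 ≤ n) (C : Matrix (Fin 1) (Fin n) ℝ) (θ t₀ : ℝ)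
    (𝒜 : ℝ → Matrix (Fin n) (Fin n) ℝ) (h𝒜 : Continuous 𝒜)
    (M : ℝ) (hM : ∀ t : ℝ, ‖Matrix.toEuclideanCLM (𝕜 := ℝ) (𝒜 t)‖ ≤ M)
    (S₀ : Matrix (Fin n) (Fin n) ℝ) (hS₀ : S₀ᵀ = S₀) :
    ∃ S : ℝ → Matrix (Fin n) (Fin n) ℝ,
      (S t₀ = S₀ ∧ ∀ t ∈ Set.Ici t₀, ∀ i j, HasDerivWithinAt (fun τ => S τ i j)
        ((-(𝒜 t)ᵀ * S t - S t * 𝒜 t - θ • S t + Cᵀ * C) i j) (Set.Ici t₀) t)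
      ∧ (∀ t ∈ Set.Ici t₀, (S t)ᵀ = S t)
      ∧ ∀ S₂ : ℝ → Matrix (Fin n) (Fin n) ℝ,
          (S₂ t₀ = S₀ ∧ ∀ t ∈ Set.Ici t₀, ∀ i j, HasDerivWithinAt (fun τ => S₂ τ i j)
            ((-(𝒜 t)ᵀ * S₂ t - S₂ t * 𝒜 t - θ • S₂ t + Cᵀ * C) i j) (Set.Ici t₀) t)
          → ∀ t ∈ Set.Ici t₀, S₂ t = S t := by
  classical
  have hM0 : (0:ℝ) ≤ M := le_trans (norm_nonneg _) (hM 0)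
  have hAM : ∀ t, ‖𝒜 t‖ ≤ M := fun t => (Matrix.norm_le_iff hM0).mpr fun i j => by
    simpa [Real.norm_eq_abs] using (entry_le_clm_norm (𝒜 t) i j).trans (hM t)
  obtain ⟨S, hSinit, hSder⟩ := exists_Ici (Q := Cᵀ * C) (θ := θ) h𝒜 hAM t₀ S₀
  have muniq : ∀ S₂ : ℝ → Matrix (Fin n) (Fin n) ℝ, S₂ t₀ = S₀ →
      (∀ t ∈ Ici t₀, HasDerivWithinAt S₂ (vf 𝒜 θ (Cᵀ * C) t (S₂ t)) (Ici t₀) t) →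
      ∀ t ∈ Ici t₀, S₂ t = S t := by
    intro S₂ h0 hd t ht
    refine unique_Icc (a := t₀) (b := t) hAM
      (fun τ hτ => ((hd τ hτ.1).continuousWithinAt).mono Icc_subset_Ici_self)
      (fun τ hτ => (hd τ hτ.1).mono (Ici_subset_Ici.mpr hτ.1))
      (fun τ hτ => ((hSder τ hτ.1).continuousWithinAt).mono Icc_subset_Ici_self)
      (fun τ hτ => (hSder τ hτ.1).mono (Ici_subset_Ici.mpr hτ.1))
      (h0.trans hSinit.symm) (right_mem_Icc.mpr ht)
  refine ⟨S, ⟨hSinit, fun t ht i j => ?_⟩, fun t ht => ?_, fun S₂ hS₂ t ht => ?_⟩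
  · exact hasDerivWithinAt_matrix.mp (hSder t ht) i j
  · have hQsymm : (Cᵀ * C)ᵀ = Cᵀ * C := by
      rw [Matrix.transpose_mul, Matrix.transpose_transpose]
    have hTder : ∀ τ ∈ Ici t₀, HasDerivWithinAt (fun τ => (S τ)ᵀ)
        (vf 𝒜 θ (Cᵀ * C) τ ((S τ)ᵀ)) (Ici t₀) τ := by
      intro τ hτ
      rw [hasDerivWithinAt_matrix]
      intro i j
      have h1 := hasDerivWithinAt_matrix.mp (hSder τ hτ) j i
      have h2 : (vf 𝒜 θ (Cᵀ * C) τ (S τ)) j i = (vf 𝒜 θ (Cᵀ * C) τ ((S τ)ᵀ)) i j := by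
        rw [← vf_transpose 𝒜 θ (Cᵀ * C) τ hQsymm]
        rfl
      exact h2 ▸ h1
    exact muniq (fun τ => (S τ)ᵀ) (by show (S t₀)ᵀ = S₀; rw [hSinit, hS₀]) hTder t ht
  · exact muniq S₂ hS₂.1
      (fun τ hτ => hasDerivWithinAt_matrix.mpr fun i j => hS₂.2 τ hτ i j) t ht
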